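/- arXiv:1707.00049 — 8 statements merged into one kernel-verified Lean document; each statement's English description precedes it below -/
import Mathlib

section
/- There does not exist an odd integer n > 1 together with two positive divisors d1, d2 of (n^2+1)/2 such that d1 + d2 = n + 1. -/
/-- Vieta jumping descent: for `t ≥ 2`, the equation `(d1+d2-1)^2 + 1 = 2*t*d1*d2`
has no positive integer solutions. -/
lemma vieta_no_sol (t : ℤ) (ht : 2 ≤ t) :
    ∀ s : ℕ, ∀ d1 d2 : ℤ, 0 < d1 → 0 < d2 → d1 + d2 = (s : ℤ) →
      (d1 + d2 - 1) ^ 2 + 1 = 2 * t * d1 * d2 → False := by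
  intro s
  induction s using Nat.strong_induction_on with
  | _ s ih =>
    intro d1 d2 h1 h2 hs heq
    rcases lt_trichotomy d1 d2 with hlt | hEq | hgt
    · -- jump on d2 (the larger one)
      have hd2 : 2 ≤ d2 := by omega
      set e : ℤ := 2 * t * d1 - 2 * d1 + 2 - d2 with he
      have hprod : d2 * e = (d1 - 1) ^ 2 + 1 := by linear_combination -heq
      have hepos : 0 < e := by
        rcases le_or_gt e 0 with hle | h
        · have h0 : d2 * e ≤ d2 * 0 := mul_le_mul_of_nonneg_left hle h2.le
          nlinarith [sq_nonneg (d1 - 1)]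
        · exact h
      have helt : e < d2 := by
        rcases lt_or_ge e d2 with h | hge
        · exact h
        · have h0 : d2 * d2 ≤ d2 * e := mul_le_mul_of_nonneg_left hge h2.le
          nlinarith [mul_nonneg (by linarith : (0:ℤ) ≤ d2 - 1 - d1)
            (by linarith : (0:ℤ) ≤ d2 + d1 - 3)]
      have hsum' : d1 + e = ((d1 + e).toNat : ℤ) :=
        (Int.toNat_of_nonneg (by linarith)).symm
      have hlt' : (d1 + e).toNat < s := by omega
      exact ih _ hlt' d1 e h1 hepos hsum' (by linear_combination heq)
    · -- d1 = d2 : impossible directly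
      subst hEq
      nlinarith [mul_nonneg (by linarith : (0:ℤ) ≤ t - 2) (mul_pos h1 h1).le]
    · -- jump on d1 (the larger one)
      have hd1 : 2 ≤ d1 := by omega
      set e : ℤ := 2 * t * d2 - 2 * d2 + 2 - d1 with he
      have hprod : d1 * e = (d2 - 1) ^ 2 + 1 := by linear_combination -heq
      have hepos : 0 < e := by
        rcases le_or_gt e 0 with hle | h
        · have h0 : d1 * e ≤ d1 * 0 := mul_le_mul_of_nonneg_left hle h1.le
          nlinarith [sq_nonneg (d2 - 1)]
        · exact h
      have helt : e < d1 := by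
        rcases lt_or_ge e d1 with h | hge
        · exact h
        · have h0 : d1 * d1 ≤ d1 * e := mul_le_mul_of_nonneg_left hge h1.le
          nlinarith [mul_nonneg (by linarith : (0:ℤ) ≤ d1 - 1 - d2)
            (by linarith : (0:ℤ) ≤ d1 + d2 - 3)]
      have hsum' : e + d2 = ((e + d2).toNat : ℤ) :=
        (Int.toNat_of_nonneg (by linarith)).symm
      have hlt' : (e + d2).toNat < s := by omega
      exact ih _ hlt' e d2 hepos h2 hsum' (by linear_combination heq)

theorem no_divisor_pair_sum_n_add_one :
    ¬ ∃ (n d1 d2 : ℤ), 1 < n ∧ Odd n ∧ 0 < d1 ∧ 0 < d2 ∧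
      d1 ∣ (n ^ 2 + 1) / 2 ∧ d2 ∣ (n ^ 2 + 1) / 2 ∧ d1 + d2 = n + 1 := by
  rintro ⟨n, d1, d2, hn, ⟨k, hk⟩, h1, h2, hdvd1, hdvd2, hsum⟩
  set N : ℤ := (n ^ 2 + 1) / 2 with hNdef
  have h2dvd : (2 : ℤ) ∣ n ^ 2 + 1 := ⟨2 * k ^ 2 + 2 * k + 1, by rw [hk]; ring⟩
  have hN : 2 * N = n ^ 2 + 1 := Int.mul_ediv_cancel' h2dvd
  have hNk : N = 2 * (k * k + k) + 1 := by
    have h' : 2 * N = 2 * (2 * (k * k + k) + 1) := by rw [hN, hk]; ring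
    linarith
  have hNodd : ¬ (2 : ℤ) ∣ N := by
    rintro ⟨m, hm⟩
    have : (2 : ℤ) ∣ 1 := ⟨m - (k * k + k), by linarith⟩
    norm_num at this
  -- gcd d1 d2 = 1
  have hcop : IsCoprime d1 d2 := by
    rw [Int.isCoprime_iff_gcd_eq_one]
    set g : ℕ := Int.gcd d1 d2 with hg
    have hg1 : (g : ℤ) ∣ d1 := Int.gcd_dvd_left d1 d2
    have hg2 : (g : ℤ) ∣ d2 := Int.gcd_dvd_right d1 d2
    have hgN : (g : ℤ) ∣ N := hg1.trans hdvd1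
    have hgsum : (g : ℤ) ∣ n + 1 := hsum ▸ dvd_add hg1 hg2
    have hg2' : (g : ℤ) ∣ 2 := by
      have hA : (g : ℤ) ∣ n ^ 2 + 1 := hgN.trans ⟨2, by linarith⟩
      have hB : (g : ℤ) ∣ (n + 1) * (n - 1) := hgsum.mul_right _
      have hC : (g : ℤ) ∣ (n ^ 2 + 1) - (n + 1) * (n - 1) := dvd_sub hA hB
      convert hC using 1; ring
    have hgodd : ¬ (2 : ℤ) ∣ (g : ℤ) := fun h => hNodd (h.trans hgN)
    have hgn : g ∣ 2 := by exact_mod_cast hg2'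
    rcases (Nat.dvd_prime Nat.prime_two).mp hgn with h | h
    · exact h
    · exfalso
      apply hgodd
      rw [h]
      norm_num
  have hmdvd : d1 * d2 ∣ N := hcop.mul_dvd hdvd1 hdvd2
  obtain ⟨t, hT⟩ := hmdvd
  have hNpos : 0 < N := by nlinarith
  have htpos : 0 < t := by
    rcases le_or_gt t 0 with h | h
    · have h0 : d1 * d2 * t ≤ d1 * d2 * 0 :=
        mul_le_mul_of_nonneg_left h (mul_pos h1 h2).le
      nlinarith
    · exact h
  rcases lt_or_ge t 2 with h1t | ht
  · -- t = 1 : discriminant contradiction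
    have ht1 : t = 1 := by omega
    rw [ht1, mul_one] at hT
    nlinarith [sq_nonneg (d1 - d2), sq_nonneg (n - 1)]
  · -- t ≥ 2 : Vieta descent
    have heq : (d1 + d2 - 1) ^ 2 + 1 = 2 * t * d1 * d2 := by
      have hn' : d1 + d2 - 1 = n := by linarith
      rw [hn']
      linear_combination -hN + 2 * hT
    exact vieta_no_sol t ht (d1 + d2).toNat d1 d2 h1 h2
      (Int.toNat_of_nonneg (by linarith)).symm heq
end

section
/- For every even positive integer δ, there are infinitely many odd positive integers n for which there exist divisors d1, d2 > 1 of (n^2+1)/2 such that d1 + d2 = δ(n+1) + 2. -/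
lemma pell_aux (k : ℤ) (hk : 1 ≤ k) :
    ∀ j : ℕ, ∃ y t : ℤ, y^2 - (4*k^2-2)*t^2 = 1 ∧ (j:ℤ) ≤ t ∧ 1 ≤ y := by
  intro j
  induction j with
  | zero => exact ⟨1, 0, by ring, by norm_num, le_refl 1⟩
  | succ m ih =>
    obtain ⟨y, t, h1, h2, h3⟩ := ih
    refine ⟨y*(4*k^2-1) + (4*k^2-2)*t*(2*k), y*(2*k) + t*(4*k^2-1), ?_, ?_, ?_⟩
    · linear_combination h1
    · have h0t : (0:ℤ) ≤ t := le_trans (by positivity) h2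
      push_cast
      nlinarith [mul_nonneg h0t (show (0:ℤ) ≤ 4*k^2-2 by nlinarith),
        mul_nonneg (sub_nonneg.2 hk) (sub_nonneg.2 h3)]
    · have h0t : (0:ℤ) ≤ t := le_trans (by positivity) h2
      nlinarith [mul_nonneg (sub_nonneg.2 h3) (show (0:ℤ) ≤ 4*k^2-2 by nlinarith),
        mul_nonneg (mul_nonneg h0t (show (0:ℤ) ≤ k by linarith)) (show (0:ℤ) ≤ 4*k^2-2 by nlinarith)]

theorem infinitely_many_n_for_delta_plus_two (δ : ℤ) (hpos : 0 < δ) (heven : Even δ) :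
    ∀ N : ℤ, ∃ n : ℤ, N < n ∧ 0 < n ∧ Odd n ∧
      ∃ d1 d2 : ℤ, 1 < d1 ∧ 1 < d2 ∧ d1 ∣ (n ^ 2 + 1) / 2 ∧ d2 ∣ (n ^ 2 + 1) / 2 ∧
        d1 + d2 = δ * (n + 1) + 2 := by
  obtain ⟨k, hδ⟩ := heven
  have hk : 1 ≤ k := by omega
  intro N
  obtain ⟨y, t, hy, ht, hy1⟩ := pell_aux k hk (N.toNat + 1)
  have htN : N < t := by
    have := Int.self_le_toNat N
    push_cast at ht
    omega
  have ht1 : 1 ≤ t := by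
    push_cast at ht
    omega
  set n : ℤ := 4*(2*k+1)*t^2 - 1 with hn
  have hnpos : 0 < n := by nlinarith
  have hNn : N < n := by nlinarith
  refine ⟨n, hNn, hnpos, ⟨2*(2*k+1)*t^2 - 1, by rw [hn]; ring⟩, ?_⟩
  set d1 : ℤ := k*(n+1)+1 + 2*(2*k+1)*t*y with hd1
  set d2 : ℤ := k*(n+1)+1 - 2*(2*k+1)*t*y with hd2
  have hprod : n^2 + 1 = 2 * (d1 * d2) := by
    rw [hd1, hd2, hn]
    linear_combination (8*(2*k+1)^2*t^2) * hy
  have hdiv : (n^2 + 1) / 2 = d1 * d2 := by omega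
  have hylt : y < 2*k*t := by
    by_contra hcon
    push_neg at hcon
    have h0 : (0:ℤ) ≤ 2*k*t := by positivity
    have hsq : (2*k*t)^2 ≤ y^2 := by
      nlinarith [mul_le_mul hcon hcon h0 (le_trans h0 hcon)]
    nlinarith [mul_pos (show (0:ℤ) < t by linarith) (show (0:ℤ) < t by linarith)]
  refine ⟨d1, d2, ?_, ?_, ?_, ?_, ?_⟩
  · rw [hd1, hn]; nlinarith
  · rw [hd2, hn]; nlinarith
  · rw [hdiv]; exact Dvd.intro d2 rfl
  · rw [hdiv]; exact Dvd.intro_left d1 rfl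
  · rw [hd1, hd2, hδ]; ring
end

section
/- For every positive integer δ, if n = 4δ^3 + 4δ^2 - 1 then d1 = 2δ^2+2δ+1 and d2 = 4δ^4+4δ^3-2δ^2-2δ+1 are divisors of (n^2+1)/2 and satisfy d1 + d2 = δn + δ + 2. -/
theorem divisors_for_n_eq_cubic (δ : ℤ) (hpos : 0 < δ)
    (n : ℤ) (hn : n = 4 * δ ^ 3 + 4 * δ ^ 2 - 1) :
    (2 * δ ^ 2 + 2 * δ + 1) ∣ (n ^ 2 + 1) / 2 ∧
    (4 * δ ^ 4 + 4 * δ ^ 3 - 2 * δ ^ 2 - 2 * δ + 1) ∣ (n ^ 2 + 1) / 2 ∧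
    (2 * δ ^ 2 + 2 * δ + 1) + (4 * δ ^ 4 + 4 * δ ^ 3 - 2 * δ ^ 2 - 2 * δ + 1)
      = δ * n + δ + 2 := by
  have h : (n ^ 2 + 1) / 2 =
      (2 * δ ^ 2 + 2 * δ + 1) * (4 * δ ^ 4 + 4 * δ ^ 3 - 2 * δ ^ 2 - 2 * δ + 1) := by
    have : n ^ 2 + 1 =
        2 * ((2 * δ ^ 2 + 2 * δ + 1) * (4 * δ ^ 4 + 4 * δ ^ 3 - 2 * δ ^ 2 - 2 * δ + 1)) := by
      subst hn; ring
    rw [this, Int.mul_ediv_cancel_left _ (by norm_num)]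
  refine ⟨h ▸ Dvd.intro _ rfl, h ▸ Dvd.intro_left _ rfl, by subst hn; ring⟩
end

section
/- For every positive integer δ, if n = 8δ^5 + 8δ^4 - 8δ^3 - 8δ^2 + 2δ + 1 then d1 = 4δ^4+4δ^3-2δ^2-2δ+1 and d2 = 8δ^6+8δ^5-12δ^4-12δ^3+4δ^2+4δ+1 are divisors of (n^2+1)/2 and satisfy d1 + d2 = δn + δ + 2. -/
theorem divisors_for_n_eq_quintic (δ : ℤ) (hpos : 0 < δ)
    (n : ℤ) (hn : n = 8 * δ ^ 5 + 8 * δ ^ 4 - 8 * δ ^ 3 - 8 * δ ^ 2 + 2 * δ + 1) :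
    (4 * δ ^ 4 + 4 * δ ^ 3 - 2 * δ ^ 2 - 2 * δ + 1) ∣ (n ^ 2 + 1) / 2 ∧
    (8 * δ ^ 6 + 8 * δ ^ 5 - 12 * δ ^ 4 - 12 * δ ^ 3 + 4 * δ ^ 2 + 4 * δ + 1) ∣ (n ^ 2 + 1) / 2 ∧
    (4 * δ ^ 4 + 4 * δ ^ 3 - 2 * δ ^ 2 - 2 * δ + 1) +
      (8 * δ ^ 6 + 8 * δ ^ 5 - 12 * δ ^ 4 - 12 * δ ^ 3 + 4 * δ ^ 2 + 4 * δ + 1)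
      = δ * n + δ + 2 := by
  subst hn
  have h : ((8 * δ ^ 5 + 8 * δ ^ 4 - 8 * δ ^ 3 - 8 * δ ^ 2 + 2 * δ + 1) ^ 2 + 1)
      = 2 * ((4 * δ ^ 4 + 4 * δ ^ 3 - 2 * δ ^ 2 - 2 * δ + 1) *
        (8 * δ ^ 6 + 8 * δ ^ 5 - 12 * δ ^ 4 - 12 * δ ^ 3 + 4 * δ ^ 2 + 4 * δ + 1)) := by ring
  rw [h, Int.mul_ediv_cancel_left _ two_ne_zero]
  refine ⟨Dvd.intro _ rfl, Dvd.intro_left _ rfl, by ring⟩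
end

section
/- Let δ be an even positive integer and define U_0 = 1, U_1 = δ^2 - 1, U_{m+2} = 2(δ^2-1)U_{m+1} - U_m. Then for every m ≥ 1, n_m = (2(δ+1)U_m - δ(δ+2))/(δ^2 - 2) is an odd positive integer. -/
theorem n_m_odd_positive_integer (δ : ℤ) (hpos : 0 < δ) (heven : Even δ) (U : ℕ → ℤ)
    (h0 : U 0 = 1) (h1 : U 1 = δ ^ 2 - 1)
    (hrec : ∀ m : ℕ, U (m + 2) = 2 * (δ ^ 2 - 1) * U (m + 1) - U m) :
    ∀ m : ℕ, 1 ≤ m →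
      (δ ^ 2 - 2) ∣ (2 * (δ + 1) * U m - δ * (δ + 2)) ∧
      Odd ((2 * (δ + 1) * U m - δ * (δ + 2)) / (δ ^ 2 - 2)) ∧
      0 < (2 * (δ + 1) * U m - δ * (δ + 2)) / (δ ^ 2 - 2) := by
  obtain ⟨c, hc⟩ := heven
  have hδ2 : 2 ≤ δ := by omega
  set d : ℤ := δ ^ 2 - 2 with hd
  have hdpos : 0 < d := by nlinarith
  -- combined invariant: congruence mod d, lower bound, monotonicity
  have key : ∀ m : ℕ, (d ∣ (U m - 1) ∧ 1 ≤ U m ∧ U m ≤ U (m + 1)) ∧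
      (d ∣ (U (m + 1) - 1) ∧ 1 ≤ U (m + 1) ∧ U (m + 1) ≤ U (m + 2)) := by
    intro m
    induction m with
    | zero =>
      have h2 : U 2 = 2 * (δ ^ 2 - 1) * U 1 - U 0 := hrec 0
      refine ⟨⟨?_, ?_, ?_⟩, ?_, ?_, ?_⟩
      · simp [h0]
      · simp [h0]
      · rw [h0, h1]; nlinarith
      · exact ⟨1, by rw [h1]; ring⟩
      · rw [h1]; nlinarith
      · rw [h2, h0, h1]; nlinarith
    | succ n ih =>
      obtain ⟨⟨hdvd0, hge0, hmono0⟩, hdvd1, hge1, hmono1⟩ := ih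
      refine ⟨⟨hdvd1, hge1, hmono1⟩, ?_, ?_, ?_⟩
      · -- d ∣ U (n+2) - 1
        obtain ⟨a, ha⟩ := hdvd0
        obtain ⟨b, hb⟩ := hdvd1
        refine ⟨2 * (δ ^ 2 - 1) * b - a + 2, ?_⟩
        have := hrec n
        rw [this]
        have hUa : U n = d * a + 1 := by linarith
        have hUb : U (n + 1) = d * b + 1 := by linarith
        rw [hUa, hUb]; ring
      · linarith
      · -- U (n+2) ≤ U (n+3)
        have h3 : U (n + 3) = 2 * (δ ^ 2 - 1) * U (n + 2) - U (n + 1) := hrec (n + 1)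
        have h2 : U (n + 2) = 2 * (δ ^ 2 - 1) * U (n + 1) - U n := hrec n
        have hge2 : 1 ≤ U (n + 2) := by linarith
        have hle : U (n + 1) ≤ U (n + 2) := hmono1
        rw [h3]; nlinarith
  -- lower bound for m ≥ 1 : U 1 ≤ U m
  have hlb : ∀ k : ℕ, U 1 ≤ U (k + 1) := by
    intro k
    induction k with
    | zero => exact le_refl _
    | succ n ih =>
      have := ((key n).2).2.2
      linarith
  intro m hm
  obtain ⟨k, rfl⟩ : ∃ k, m = k + 1 := ⟨m - 1, by omega⟩
  have hdvd : d ∣ (U (k + 1) - 1) := ((key k).2).1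
  obtain ⟨t, ht⟩ := hdvd
  have hU : U (k + 1) = d * t + 1 := by linarith
  have hN : 2 * (δ + 1) * U (k + 1) - δ * (δ + 2) = d * (2 * (δ + 1) * t - 1) := by
    rw [hU]; ring
  have hq : (2 * (δ + 1) * U (k + 1) - δ * (δ + 2)) / d = 2 * (δ + 1) * t - 1 := by
    rw [hN, Int.mul_ediv_cancel_left _ (by positivity)]
  refine ⟨⟨2 * (δ + 1) * t - 1, hN⟩, ?_, ?_⟩
  · rw [hq]
    exact ⟨(δ + 1) * t - 1, by ring⟩
  · rw [hq]
    have hUge : δ ^ 2 - 1 ≤ U (k + 1) := by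
      have := hlb k; rw [h1] at this; linarith
    have hNpos : 0 < 2 * (δ + 1) * U (k + 1) - δ * (δ + 2) := by nlinarith
    rw [hN] at hNpos
    by_contra h
    push_neg at h
    nlinarith
end

section
/- Let δ ≥ 2 be an integer and define U_0 = 1, U_1 = δ^2 - 1, U_{m+2} = 2(δ^2-1)U_{m+1} - U_m. Then for all m ≥ 1: δ^4 - 2δ^2(U_m U_{m-1} + 1) + (U_m + U_{m-1})^2 = 0. -/
theorem U_identity (δ : ℤ) (hδ : 2 ≤ δ) (U : ℕ → ℤ)
    (h0 : U 0 = 1) (h1 : U 1 = δ ^ 2 - 1)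
    (hrec : ∀ m : ℕ, U (m + 2) = 2 * (δ ^ 2 - 1) * U (m + 1) - U m) :
    ∀ m : ℕ, δ ^ 4 - 2 * δ ^ 2 * (U (m + 1) * U m + 1) + (U (m + 1) + U m) ^ 2 = 0 := by
  intro m
  induction m with
  | zero => rw [h0, h1]; ring
  | succ n ih => rw [hrec n]; linear_combination ih
end

section
/- Suppose δ and ε are even integers, n is odd, and d1, d2 are positive divisors of (n^2+1)/2 with d1 + d2 = δn + ε. Let g = gcd(d1, d2). Then g ≡ 1 (mod 4) and g divides (δ^2 + ε^2)/4. -/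
lemma odd_dvd_sq_add_one_mod_four (a : ℕ) : ∀ d : ℕ, Odd d → d ∣ a ^ 2 + 1 → d % 4 = 1 := by
  intro d
  induction d using Nat.strong_induction_on with
  | _ d ih =>
    intro hodd hdvd
    by_cases hd1 : d = 1
    · simp [hd1]
    · set p := d.minFac with hp_def
      have hp : p.Prime := Nat.minFac_prime hd1
      have hpd : p ∣ d := Nat.minFac_dvd d
      haveI : Fact p.Prime := ⟨hp⟩
      have hpodd : p % 2 = 1 := by
        rcases Nat.even_or_odd p with he | ho
        · exfalso
          have h2d : (2 : ℕ) ∣ d := dvd_trans he.two_dvd hpd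
          rw [Nat.odd_iff] at hodd
          omega
        · exact Nat.odd_iff.mp ho
      have hpa : p ∣ a ^ 2 + 1 := hpd.trans hdvd
      have hcast : ((a : ZMod p)) ^ 2 = -1 := by
        have h0 : ((a ^ 2 + 1 : ℕ) : ZMod p) = 0 :=
          (ZMod.natCast_eq_zero_iff _ _).mpr hpa
        push_cast at h0
        linear_combination h0
      have hsq : IsSquare (-1 : ZMod p) := ⟨a, by rw [← hcast]; ring⟩
      have hp4 : p % 4 ≠ 3 := ZMod.exists_sq_eq_neg_one_iff.mp hsq
      have hp4' : p % 4 = 1 := by omega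
      obtain ⟨k, hk⟩ := hpd
      have hkodd : Odd k := (Nat.odd_mul.mp (hk ▸ hodd)).2
      have hd0 : d ≠ 0 := by rw [Nat.odd_iff] at hodd; omega
      have hk0 : k ≠ 0 := by rintro rfl; simp at hk; omega
      have hp2 : 2 ≤ p := hp.two_le
      have hklt : k < d := by
        calc k < 2 * k := by omega
        _ ≤ p * k := Nat.mul_le_mul_right k hp2
        _ = d := hk.symm
      have hkdvd : k ∣ a ^ 2 + 1 := (Dvd.intro_left p hk.symm).trans hdvd
      have hk4 : k % 4 = 1 := ih k hklt hkodd hkdvd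
      rw [hk, Nat.mul_mod, hp4', hk4]

theorem gcd_properties (δ ε n d1 d2 : ℤ) (hδ : Even δ) (hε : Even ε) (hn : Odd n)
    (hd1 : 0 < d1) (hd2 : 0 < d2)
    (hdvd1 : d1 ∣ (n ^ 2 + 1) / 2) (hdvd2 : d2 ∣ (n ^ 2 + 1) / 2)
    (hsum : d1 + d2 = δ * n + ε) :
    (Int.gcd d1 d2 : ℤ) ≡ 1 [ZMOD 4] ∧ (Int.gcd d1 d2 : ℤ) ∣ (δ ^ 2 + ε ^ 2) / 4 := by
  obtain ⟨m, hm⟩ := hn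
  set M : ℤ := 2 * m ^ 2 + 2 * m + 1 with hM_def
  have hM : (n ^ 2 + 1) / 2 = M := by
    have h2 : n ^ 2 + 1 = 2 * M := by rw [hm]; ring
    rw [h2]; exact Int.mul_ediv_cancel_left _ (by norm_num)
  rw [hM] at hdvd1 hdvd2
  set g : ℤ := (Int.gcd d1 d2 : ℤ) with hg_def
  have hgd1 : g ∣ d1 := Int.gcd_dvd_left d1 d2
  have hgd2 : g ∣ d2 := Int.gcd_dvd_right d1 d2
  have hgM : g ∣ M := hgd1.trans hdvd1
  have hgsum : g ∣ δ * n + ε := hsum ▸ dvd_add hgd1 hgd2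
  have hModd : Odd M := Int.odd_iff.mpr (by omega)
  have hgodd : Odd g := by
    rcases Int.even_or_odd g with he | ho
    · exfalso
      obtain ⟨u, hu⟩ := he.two_dvd.trans hgM
      rw [Int.odd_iff] at hModd
      omega
    · exact ho
  have hgn : g ∣ n ^ 2 + 1 := by
    have h2 : n ^ 2 + 1 = 2 * M := by rw [hm]; ring
    rw [h2]; exact hgM.mul_left 2
  obtain ⟨A, hA⟩ := hδ
  obtain ⟨B, hB⟩ := hε
  have key : g ∣ δ ^ 2 + ε ^ 2 := by
    have h : δ ^ 2 + ε ^ 2 = δ ^ 2 * (n ^ 2 + 1) - (δ * n + ε) * (δ * n - ε) := by ring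
    rw [h]
    exact dvd_sub (hgn.mul_left _) (hgsum.mul_right _)
  have hdiv4 : (δ ^ 2 + ε ^ 2) / 4 = A ^ 2 + B ^ 2 := by
    have h : δ ^ 2 + ε ^ 2 = 4 * (A ^ 2 + B ^ 2) := by rw [hA, hB]; ring
    rw [h]; exact Int.mul_ediv_cancel_left _ (by norm_num)
  have hpart2 : g ∣ (δ ^ 2 + ε ^ 2) / 4 := by
    rw [hdiv4]
    have h4 : g ∣ 4 * (A ^ 2 + B ^ 2) := by
      have h : 4 * (A ^ 2 + B ^ 2) = δ ^ 2 + ε ^ 2 := by rw [hA, hB]; ring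
      rw [h]; exact key
    obtain ⟨t, ht⟩ := hgodd
    have h2 : IsCoprime (2 : ℤ) g := ⟨-t, 1, by rw [ht]; ring⟩
    have hcop : IsCoprime ((2 : ℤ) * 2) g := h2.mul_left h2
    norm_num at hcop
    exact hcop.symm.dvd_of_dvd_mul_left h4
  refine ⟨?_, hpart2⟩
  -- mod 4 part
  have hgnat : Int.gcd d1 d2 ∣ n.natAbs ^ 2 + 1 := by
    rw [← Int.natCast_dvd_natCast]
    push_cast
    rw [sq_abs]
    exact hgn
  have hoddnat : Odd (Int.gcd d1 d2) := Int.odd_coe_nat _ |>.mp hgodd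
  have h4 : Int.gcd d1 d2 % 4 = 1 := odd_dvd_sq_add_one_mod_four n.natAbs _ hoddnat hgnat
  show (Int.gcd d1 d2 : ℤ) % 4 = 1 % 4
  omega
end

section
/- Every positive divisor of (n^2+1)/2, for n an odd integer, is congruent to 1 modulo 4. -/
-- Every prime dividing k²+(k+1)² is ≡ 1 mod 4.
lemma prime_factor_mod_four (k : ℤ) (p : ℕ) (hp : p.Prime)
    (hdvd : (p : ℤ) ∣ k ^ 2 + (k + 1) ^ 2) : p % 4 = 1 := by
  have hodd : p ≠ 2 := by
    rintro rfl
    have h2 : (2 : ℤ) ∣ k ^ 2 + (k + 1) ^ 2 := by exact_mod_cast hdvd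
    have heq : k ^ 2 + (k + 1) ^ 2 = 2 * (k ^ 2 + k) + 1 := by ring
    omega
  haveI : Fact p.Prime := ⟨hp⟩
  have hz : ((k : ZMod p)) ^ 2 + ((k : ZMod p) + 1) ^ 2 = 0 := by
    have := (ZMod.intCast_zmod_eq_zero_iff_dvd _ p).2 hdvd
    push_cast at this
    linear_combination this
  have hk1 : (k : ZMod p) + 1 ≠ 0 := by
    intro h
    have hk2 : (k : ZMod p) ^ 2 = 0 := by linear_combination hz - ((k : ZMod p) + 1) * h
    have hk0 : (k : ZMod p) = 0 := pow_eq_zero_iff (two_ne_zero) |>.mp hk2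
    rw [hk0, zero_add] at h
    exact one_ne_zero h
  have hsq : IsSquare (-1 : ZMod p) := by
    refine ⟨(k : ZMod p) * ((k : ZMod p) + 1)⁻¹, ?_⟩
    have hgoal : ((k : ZMod p) * ((k : ZMod p) + 1)⁻¹) ^ 2 * ((k : ZMod p) + 1) ^ 2
        = -1 * ((k : ZMod p) + 1) ^ 2 := by
      rw [mul_pow, mul_assoc, ← mul_pow, inv_mul_eq_div, div_self hk1, one_pow, mul_one]
      linear_combination hz
    have hne : ((k : ZMod p) + 1) ^ 2 ≠ 0 := pow_ne_zero _ hk1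
    have h := mul_right_cancel₀ hne hgoal
    rw [sq] at h
    exact h.symm
  have h3 := (ZMod.exists_sq_eq_neg_one_iff (p := p)).mp hsq
  have h2 := hp.two_le
  have hodd2 : p % 2 = 1 := Nat.odd_iff.mp (hp.odd_of_ne_two hodd)
  omega

lemma nat_divisor_mod_four (k : ℤ) (e : ℕ) (he : (e : ℤ) ∣ k ^ 2 + (k + 1) ^ 2) :
    e % 4 = 1 := by
  induction e using Nat.strong_induction_on with
  | _ e ih =>
    rcases eq_or_ne e 1 with rfl | h1
    · rfl
    rcases eq_or_ne e 0 with rfl | h0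
    · exfalso
      have : k ^ 2 + (k + 1) ^ 2 = 0 := by
        simpa using he
      nlinarith [sq_nonneg k, sq_nonneg (k + 1), sq_nonneg (2 * k + 1)]
    obtain ⟨p, hp, hpe⟩ := Nat.exists_prime_and_dvd h1
    have hpM : (p : ℤ) ∣ k ^ 2 + (k + 1) ^ 2 :=
      dvd_trans (by exact_mod_cast hpe) he
    have hp4 := prime_factor_mod_four k p hp hpM
    obtain ⟨c, rfl⟩ := hpe
    have hcM : (c : ℤ) ∣ k ^ 2 + (k + 1) ^ 2 :=
      dvd_trans (by exact_mod_cast Dvd.intro_left p rfl) he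
    have hcpos : 0 < c := Nat.pos_of_ne_zero (fun hc => h0 (by simp [hc]))
    have h2 := hp.two_le
    have hclt : c < p * c := by nlinarith
    have hc4 := ih c hclt hcM
    rw [Nat.mul_mod, hp4, hc4]

theorem divisor_cong_one_mod_four (n d : ℤ) (hn : Odd n) (hd : 0 < d)
    (hdvd : d ∣ (n ^ 2 + 1) / 2) : d % 4 = 1 := by
  obtain ⟨k, rfl⟩ := hn
  have hdiv : ((2 * k + 1) ^ 2 + 1) / 2 = k ^ 2 + (k + 1) ^ 2 := by
    have : (2 * k + 1) ^ 2 + 1 = 2 * (k ^ 2 + (k + 1) ^ 2) := by ring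
    rw [this, Int.mul_ediv_cancel_left _ (by norm_num)]
  rw [hdiv] at hdvd
  have hd' : (d.natAbs : ℤ) ∣ k ^ 2 + (k + 1) ^ 2 := by
    exact Int.natAbs_dvd.mpr hdvd
  have := nat_divisor_mod_four k d.natAbs hd'
  omega
end
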